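/- For any α, β > 0, any integer d ≥ 2α, any L > 0 and any compact C ⊂ R^d with nonempty interior, there exist parameters C0 > 0, c0 > 0, r0 > 0 and 0 < μ_min < μ_max < ∞ and a distribution P ∈ P_Σ(α, C0, β, L, c0, r0, μ_min, μ_max, C) such that the regression function η associated with P hits the level 1/2 at a point lying in the interior of the support of P_X. -/

import Mathlib

open MeasureTheory Metric Set
open scoped ENNReal NNReal

noncomputable section

/-- Feature space: `ℝ^d` with the Euclidean norm. -/
abbrev Euc (d : ℕ) := EuclideanSpace ℝ (Fin d)

/-- A sample of size `n`: `n` points of `ℝ^d × {0,1}` (labels modelled by `Bool`). -/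
abbrev Sample (d n : ℕ) := Fin n → Euc d × Bool

/-- Joint law of `(X,Y)` determined by the marginal `PX` and the regression
function `η(x) = P(Y = 1 | X = x)`. -/
def jointLaw {d : ℕ} (PX : Measure (Euc d)) (η : Euc d → ℝ) : Measure (Euc d × Bool) :=
  PX.bind fun x =>
    ENNReal.ofReal (η x) • Measure.dirac (x, true) +
      ENNReal.ofReal (1 - η x) • Measure.dirac (x, false)

/-- Law `P^{⊗n}` of an i.i.d. sample of size `n`. -/
def sampleLaw {d : ℕ} (PX : Measure (Euc d)) (η : Euc d → ℝ) (n : ℕ) :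
    Measure (Sample d n) :=
  Measure.pi fun _ => jointLaw PX η

/-- Misclassification risk `R(f) = P(Y ≠ f(X))` of a decision rule `f`. -/
def risk {d : ℕ} (PX : Measure (Euc d)) (η : Euc d → ℝ) (f : Euc d → Bool) : ℝ :=
  ∫ x, (if f x then 1 - η x else η x) ∂PX

/-- The Bayes rule `f*(x) = 1{η(x) ≥ 1/2}`. -/
def bayes {d : ℕ} (η : Euc d → ℝ) : Euc d → Bool := fun x => decide ((1 : ℝ) / 2 ≤ η x)

/-- The plug-in rule `1{g ≥ 1/2}` associated with a function `g`. -/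
def plugin {d : ℕ} (g : Euc d → ℝ) : Euc d → Bool := fun x => decide ((1 : ℝ) / 2 ≤ g x)

/-- Margin (low noise) assumption MA(α, C0):
`P_X(0 < |η(X) − 1/2| ≤ t) ≤ C0 t^α` for all `t > 0`. -/
def Margin {d : ℕ} (PX : Measure (Euc d)) (η : Euc d → ℝ) (α C0 : ℝ) : Prop :=
  ∀ t : ℝ, 0 < t →
    PX {x | 0 < |η x - 1 / 2| ∧ |η x - 1 / 2| ≤ t} ≤ ENNReal.ofReal (C0 * t ^ α)

/-- Taylor polynomial of degree `N` of `g` at `x`, evaluated at `x'`. -/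
def taylorPoly {d : ℕ} (g : Euc d → ℝ) (N : ℕ) (x x' : Euc d) : ℝ :=
  ∑ k ∈ Finset.range (N + 1), (k.factorial : ℝ)⁻¹ * iteratedFDeriv ℝ k g x (fun _ => x' - x)

/-- The Hölder class `Σ(β, L, ℝ^d)`: `g` is `⌊β⌋` times continuously differentiable
(`⌊β⌋` = largest integer strictly less than `β`, i.e. `⌈β⌉₊ - 1` for `β > 0`) and its
Taylor polynomial of degree `⌊β⌋` approximates it to order `L‖x − x'‖^β`. -/
def HolderClass {d : ℕ} (β L : ℝ) (g : Euc d → ℝ) : Prop :=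
  ContDiff ℝ (⌈β⌉₊ - 1 : ℕ) g ∧
    ∀ x x' : Euc d, |g x' - taylorPoly g (⌈β⌉₊ - 1) x x'| ≤ L * ‖x' - x‖ ^ β

/-- `(c0, r0)`-regularity of a set `A`:
`λ[A ∩ B(x,r)] ≥ c0 λ[B(x,r)]` for all `0 < r ≤ r0` and `x ∈ A`. -/
def Regular {d : ℕ} (c0 r0 : ℝ) (A : Set (Euc d)) : Prop :=
  ∀ x ∈ A, ∀ r : ℝ, 0 < r → r ≤ r0 →
    ENNReal.ofReal c0 * volume (closedBall x r) ≤ volume (A ∩ closedBall x r)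

/-- Strong density assumption with parameters `(c0, r0, μmin, μmax, K)`. -/
def StrongDensity {d : ℕ} (PX : Measure (Euc d)) (c0 r0 μmin μmax : ℝ)
    (K : Set (Euc d)) : Prop :=
  ∃ A : Set (Euc d), IsCompact A ∧ A ⊆ K ∧ Regular c0 r0 A ∧
    ∃ μ : Euc d → ℝ, Measurable μ ∧ (∀ x ∈ A, μmin ≤ μ x ∧ μ x ≤ μmax) ∧
      (∀ x, x ∉ A → μ x = 0) ∧
      PX = volume.withDensity fun x => ENNReal.ofReal (μ x)

/-- Mild density assumption with parameters `(c0, r0, μmax, K)`. -/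
def MildDensity {d : ℕ} (PX : Measure (Euc d)) (c0 r0 μmax : ℝ)
    (K : Set (Euc d)) : Prop :=
  ∃ A : Set (Euc d), IsCompact A ∧ A ⊆ K ∧ Regular c0 r0 A ∧
    ∃ μ : Euc d → ℝ, Measurable μ ∧ (∀ x ∈ A, 0 ≤ μ x ∧ μ x ≤ μmax) ∧
      (∀ x, x ∉ A → μ x = 0) ∧
      PX = volume.withDensity fun x => ENNReal.ofReal (μ x)

/-- The class `P_Σ(α, C0, β, L, c0, r0, μmin, μmax, K)`, a distribution being encoded
by its marginal `PX` together with its regression function `η`. -/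
def MemPS {d : ℕ} (α C0 β L c0 r0 μmin μmax : ℝ) (K : Set (Euc d))
    (PX : Measure (Euc d)) (η : Euc d → ℝ) : Prop :=
  IsProbabilityMeasure PX ∧ Measurable η ∧ (∀ x, η x ∈ Icc (0 : ℝ) 1) ∧
    Margin PX η α C0 ∧ HolderClass β L η ∧ StrongDensity PX c0 r0 μmin μmax K

/-- Topological support of a measure on `ℝ^d`. -/
def msupport {d : ℕ} (PX : Measure (Euc d)) : Set (Euc d) :=
  {x | ∀ r : ℝ, 0 < r → 0 < PX (ball x r)}

/-- `f` hits the level `a` at `x0`. -/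
def Hits {d : ℕ} (f : Euc d → ℝ) (a : ℝ) (x0 : Euc d) : Prop :=
  f x0 = a ∧ ∀ r : ℝ, 0 < r → ∃ x ∈ closedBall x0 r, f x ≠ a

/-- `f` crosses the level `a` at `x0`. -/
def Crosses {d : ℕ} (f : Euc d → ℝ) (a : ℝ) (x0 : Euc d) : Prop :=
  ∀ r : ℝ, 0 < r → (∃ x ∈ closedBall x0 r, f x < a) ∧ ∃ x ∈ closedBall x0 r, a < f x

/-- Expected excess risk `E[R(f̂_n)] − R(f*)` of a plug-in classifier built from the
estimator `hatη` of the regression function. -/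
def expExcess {d : ℕ} (PX : Measure (Euc d)) (η : Euc d → ℝ) {n : ℕ}
    (hatη : Sample d n → Euc d → ℝ) : ℝ :=
  (∫ ω, risk PX η (plugin (hatη ω)) ∂sampleLaw PX η n) - risk PX η (bayes η)

/-- Expected excess risk `E[R(f̂_n)] − R(f*)` of a (general) classifier. -/
def expExcessRule {d : ℕ} (PX : Measure (Euc d)) (η : Euc d → ℝ) {n : ℕ}
    (fhat : Sample d n → Euc d → Bool) : ℝ :=
  (∫ ω, risk PX η (fhat ω) ∂sampleLaw PX η n) - risk PX η (bayes η)

/-- Empirical misclassification risk of the plug-in rule `1{g ≥ 1/2}` on a sample. -/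
def empRisk {d n : ℕ} (ω : Sample d n) (g : Euc d → ℝ) : ℝ :=
  (n : ℝ)⁻¹ * ∑ i : Fin n, if plugin g (ω i).1 ≠ (ω i).2 then (1 : ℝ) else 0

section Aux

lemma norm_diag_apply {d : ℕ} (g : Euc d → ℝ) (k : ℕ) (y h : Euc d) :
    |iteratedFDeriv ℝ k g y (fun _ => h)| ≤ ‖iteratedFDeriv ℝ k g y‖ * ‖h‖ ^ k := by
  have := (iteratedFDeriv ℝ k g y).le_opNorm (fun _ => h)
  simpa [Finset.prod_const] using this

lemma hasDerivAt_line {d : ℕ} (g : Euc d → ℝ) (hg : ContDiff ℝ ((⊤:ℕ∞):WithTop ℕ∞) g)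
    (j : ℕ) (x h : Euc d) (t : ℝ) :
    HasDerivAt (fun s : ℝ => iteratedFDeriv ℝ j g (x + s • h) (fun _ => h))
      (iteratedFDeriv ℝ (j+1) g (x + t • h) (fun _ => h)) t := by
  have hc : HasDerivAt (fun s : ℝ => x + s • h) h t := by
    simpa using ((hasDerivAt_id t).smul_const h).const_add x
  have hdiff : Differentiable ℝ (iteratedFDeriv ℝ j g) :=
    hg.differentiable_iteratedFDeriv (by exact_mod_cast (lt_top_iff_ne_top.mpr (ENat.coe_ne_top j) : (j:ℕ∞) < ⊤))
  have hF : HasFDerivAt (iteratedFDeriv ℝ j g)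
      (fderiv ℝ (iteratedFDeriv ℝ j g) (x + t • h)) (x + t • h) :=
    (hdiff (x + t • h)).hasFDerivAt
  have h2 : HasDerivAt (fun s : ℝ => iteratedFDeriv ℝ j g (x + s • h))
      (fderiv ℝ (iteratedFDeriv ℝ j g) (x + t • h) h) t := hF.comp_hasDerivAt t hc
  have h3 := ((ContinuousMultilinearMap.apply ℝ (fun _ : Fin j => Euc d) ℝ
      (fun _ => h)).hasFDerivAt.comp_hasDerivAt t h2)
  have e : iteratedFDeriv ℝ (j+1) g (x + t • h) (fun _ => h)
      = fderiv ℝ (iteratedFDeriv ℝ j g) (x + t • h) h (fun _ => h) := by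
    rw [iteratedFDeriv_succ_apply_left]
    rfl
  rw [e]
  exact h3

lemma taylor_remainder_bound {d : ℕ} (g : Euc d → ℝ) (hg : ContDiff ℝ ((⊤:ℕ∞):WithTop ℕ∞) g)
    (N : ℕ) (M : ℝ) (hM : ∀ y, ‖iteratedFDeriv ℝ (N+1) g y‖ ≤ M) (x x' : Euc d) :
    |g x' - taylorPoly g N x x'| ≤ M * ‖x' - x‖ ^ (N+1) := by
  set h : Euc d := x' - x with hh
  set φ : ℕ → ℝ → ℝ := fun j t => iteratedFDeriv ℝ j g (x + t • h) (fun _ => h) with hφ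
  set P : ℝ → ℝ := fun t => ∑ j ∈ Finset.range (N+1), ((1-t)^j / (j.factorial : ℝ)) * φ j t with hPdef
  have hM0 : 0 ≤ M := le_trans (norm_nonneg _) (hM x)
  set c : ℕ → ℝ → ℝ := fun j t =>
    match j with
    | 0 => 0
    | (j+1) => ((1-t)^j / (j.factorial : ℝ)) * φ (j+1) t with hc
  have hP : ∀ t, HasDerivAt P (((1-t)^N / (N.factorial : ℝ)) * φ (N+1) t) t := by
    intro t
    have hterm : ∀ j ∈ Finset.range (N+1),
        HasDerivAt (fun s => ((1-s)^j / (j.factorial : ℝ)) * φ j s) (c (j+1) t - c j t) t := by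
      intro j _
      have h1 : HasDerivAt (fun s : ℝ => ((1-s)^j / (j.factorial : ℝ)))
          ((j : ℝ) * (1-t)^(j-1) * (-1) / (j.factorial : ℝ)) t := by
        exact (((hasDerivAt_id t).const_sub 1).pow j).div_const _
      have h2 := (h1.fun_mul (hasDerivAt_line g hg j x h t))
      refine h2.congr_deriv ?_
      symm
      rcases j with _ | jj
      · simp [hc, hφ]
      · have hfac : ((jj+1).factorial : ℝ) = (jj+1) * (jj.factorial : ℝ) := by
          rw [Nat.factorial_succ]; push_cast; ring
        have hfacne : (jj.factorial : ℝ) ≠ 0 := Nat.cast_ne_zero.mpr (Nat.factorial_ne_zero jj)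
        simp only [hc, hφ, Nat.add_sub_cancel, Nat.factorial_succ]
        push_cast
        field_simp [hfac]
        ring
    have hsum := HasDerivAt.fun_sum hterm
    have : ∑ j ∈ Finset.range (N+1), (c (j+1) t - c j t) = c (N+1) t - c 0 t :=
      Finset.sum_range_sub (fun j => c j t) (N+1)
    rw [this] at hsum
    simpa [hc] using hsum
  have bound : ∀ t ∈ Set.Ico (0:ℝ) 1, ‖((1-t)^N / (N.factorial : ℝ)) * φ (N+1) t‖ ≤ M * ‖h‖^(N+1) := by
    intro t ht
    rw [Real.norm_eq_abs, abs_mul]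
    have h01 : (0:ℝ) ≤ 1 - t := by linarith [ht.2]
    have h1t : (1:ℝ) - t ≤ 1 := by linarith [ht.1]
    have hb1 : |(1-t)^N / (N.factorial : ℝ)| ≤ 1 := by
      rw [abs_div, abs_pow, abs_of_nonneg h01, abs_of_pos (by positivity : (0:ℝ) < (N.factorial:ℝ))]
      have : (1-t)^N ≤ 1 := pow_le_one₀ h01 h1t
      have h1f : (1:ℝ) ≤ (N.factorial : ℝ) := by exact_mod_cast N.factorial_pos
      calc (1-t)^N / (N.factorial : ℝ) ≤ 1 / 1 := by
            apply div_le_div₀ (by norm_num) this (by norm_num) h1f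
        _ = 1 := by norm_num
    have hb2 : |φ (N+1) t| ≤ M * ‖h‖^(N+1) := by
      refine le_trans (norm_diag_apply g (N+1) (x + t•h) h) ?_
      exact mul_le_mul_of_nonneg_right (hM _) (by positivity)
    calc |(1-t)^N / (N.factorial : ℝ)| * |φ (N+1) t| ≤ 1 * (M * ‖h‖^(N+1)) :=
          mul_le_mul hb1 hb2 (abs_nonneg _) (by norm_num)
      _ = M * ‖h‖^(N+1) := by ring
  have key := norm_image_sub_le_of_norm_deriv_le_segment'
      (f := P) (f' := fun t => ((1-t)^N / (N.factorial : ℝ)) * φ (N+1) t)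
      (fun t _ => (hP t).hasDerivWithinAt) bound 1 (by norm_num : (1:ℝ) ∈ Set.Icc (0:ℝ) 1)
  have hP1 : P 1 = g x' := by
    simp only [hPdef]
    rw [Finset.sum_eq_single 0]
    · simp [hφ, iteratedFDeriv_zero_apply, hh, add_sub_cancel]
    · intro j _ hj
      simp [sub_self, zero_pow hj]
    · intro habs; simp at habs
  have hP0 : P 0 = taylorPoly g N x x' := by
    simp only [hPdef, taylorPoly]
    apply Finset.sum_congr rfl
    intro j _
    simp [hφ, div_eq_inv_mul, hh]
  rw [hP1, hP0] at key
  simpa [Real.norm_eq_abs] using key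

/-- Taylor polynomial of a constant plus scalar multiple. -/
lemma taylorPoly_const_add_smul {d : ℕ} (ψ : Euc d → ℝ) (hψ : ContDiff ℝ ((⊤:ℕ∞):WithTop ℕ∞) ψ)
    (a ε : ℝ) (N : ℕ) (x x' : Euc d) :
    taylorPoly (fun y => a + ε * ψ y) N x x' = a + ε * taylorPoly ψ N x x' := by
  have hterm : ∀ k : ℕ, k ≠ 0 →
      iteratedFDeriv ℝ k (fun y => a + ε * ψ y) x (fun _ => x' - x)
        = ε * iteratedFDeriv ℝ k ψ x (fun _ => x' - x) := by
    intro k hk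
    have h1 : iteratedFDeriv ℝ k (fun y => a + ε * ψ y) x
        = iteratedFDeriv ℝ k (fun _ => a) x + iteratedFDeriv ℝ k (fun y => ε * ψ y) x := by
      exact iteratedFDeriv_add_apply' contDiff_const.contDiffAt
        (contDiff_const.mul (hψ.of_le (by exact_mod_cast le_top : ((k:ℕ):WithTop ℕ∞) ≤ ((⊤:ℕ∞):WithTop ℕ∞)))).contDiffAt
    have h2 : iteratedFDeriv ℝ k (fun y => ε * ψ y) x = ε • iteratedFDeriv ℝ k ψ x := by
      exact iteratedFDeriv_const_smul_apply' (a := ε) (hψ.of_le (by exact_mod_cast le_top : ((k:ℕ):WithTop ℕ∞) ≤ ((⊤:ℕ∞):WithTop ℕ∞))).contDiffAt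
    rw [h1, h2, iteratedFDeriv_const_of_ne hk]
    simp
  unfold taylorPoly
  rw [Finset.sum_range_succ', Finset.sum_range_succ' _ N]
  simp only [iteratedFDeriv_zero_apply, Nat.factorial_zero]
  have : ∀ i ∈ Finset.range N, (((i+1).factorial : ℝ))⁻¹ *
      iteratedFDeriv ℝ (i+1) (fun y => a + ε * ψ y) x (fun _ => x' - x)
      = ε * ((((i+1).factorial : ℝ))⁻¹ * iteratedFDeriv ℝ (i+1) ψ x (fun _ => x' - x)) := by
    intro i _
    rw [hterm (i+1) (Nat.succ_ne_zero i)]; ring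
  rw [Finset.sum_congr rfl this, ← Finset.mul_sum]
  push_cast
  ring

end Aux

lemma holder_est {d : ℕ} (ψ : Euc d → ℝ) (hψ : ContDiff ℝ ((⊤:ℕ∞):WithTop ℕ∞) ψ)
    (N : ℕ) (M : ℝ) (hM1 : 1 ≤ M)
    (hM : ∀ k, k ≤ N + 1 → ∀ y, ‖iteratedFDeriv ℝ k ψ y‖ ≤ M)
    (β : ℝ) (hβ : 0 < β) (hNβ : (N : ℝ) ≤ β) (hβN : β ≤ (N : ℝ) + 1) (x x' : Euc d) :
    |ψ x' - taylorPoly ψ N x x'| ≤ ((N:ℝ) + 2) * M * ‖x' - x‖ ^ β := by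
  have hM0 : (0:ℝ) ≤ M := by linarith
  set h : ℝ := ‖x' - x‖ with hh
  have h0 : 0 ≤ h := norm_nonneg _
  rcases le_or_gt h 1 with hle | hgt
  · have key := taylor_remainder_bound ψ hψ N M (hM (N+1) le_rfl) x x'
    have hpow : h ^ (N+1) ≤ h ^ β := by
      rcases eq_or_lt_of_le h0 with h0' | h0'
      · rw [← h0', Real.zero_rpow hβ.ne', zero_pow (Nat.succ_ne_zero N)]
      · rw [← Real.rpow_natCast h (N+1)]
        apply Real.rpow_le_rpow_of_exponent_ge h0' hle
        push_cast; linarith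
    calc |ψ x' - taylorPoly ψ N x x'| ≤ M * h ^ (N+1) := key
      _ ≤ M * h ^ β := by exact mul_le_mul_of_nonneg_left hpow hM0
      _ ≤ ((N:ℝ) + 2) * M * h ^ β := by
          apply mul_le_mul_of_nonneg_right _ (Real.rpow_nonneg h0 β)
          nlinarith [Nat.cast_nonneg (α := ℝ) N]
  · have h1 : (1:ℝ) ≤ h := hgt.le
    have hβ1 : (1:ℝ) ≤ h ^ β := by
      calc (1:ℝ) = h ^ (0:ℝ) := (Real.rpow_zero h).symm
        _ ≤ h ^ β := Real.rpow_le_rpow_of_exponent_le h1 hβ.le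
    have hNb : h ^ (N:ℕ) ≤ h ^ β := by
      rw [← Real.rpow_natCast h N]
      exact Real.rpow_le_rpow_of_exponent_le h1 hNβ
    have hb1 : |ψ x'| ≤ M := by
      have := hM 0 (Nat.zero_le _) x'
      simpa [norm_iteratedFDeriv_zero] using this
    have hb2 : |taylorPoly ψ N x x'| ≤ ((N:ℝ)+1) * (M * h ^ (N:ℕ)) := by
      unfold taylorPoly
      refine le_trans (Finset.abs_sum_le_sum_abs _ _) ?_
      have hterm : ∀ k ∈ Finset.range (N+1),
          |(k.factorial : ℝ)⁻¹ * iteratedFDeriv ℝ k ψ x (fun _ => x' - x)| ≤ M * h ^ (N:ℕ) := by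
        intro k hk
        rw [Finset.mem_range] at hk
        have hkN : k ≤ N := Nat.lt_succ_iff.mp hk
        rw [abs_mul]
        have e1 : |(k.factorial : ℝ)⁻¹| ≤ 1 := by
          rw [abs_of_pos (by positivity)]
          rw [inv_le_one_iff₀]
          right; exact_mod_cast Nat.one_le_iff_ne_zero.mpr (Nat.factorial_ne_zero k)
        have e2 : |iteratedFDeriv ℝ k ψ x (fun _ => x' - x)| ≤ M * h ^ (N:ℕ) := by
          refine le_trans (norm_diag_apply ψ k x (x'-x)) ?_
          have := hM k (by omega) x
          calc ‖iteratedFDeriv ℝ k ψ x‖ * ‖x'-x‖ ^ k ≤ M * h ^ k := by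
                apply mul_le_mul this (le_of_eq rfl) (by positivity) hM0
            _ ≤ M * h ^ (N:ℕ) := by
                apply mul_le_mul_of_nonneg_left (pow_le_pow_right₀ h1 hkN) hM0
        calc |(k.factorial : ℝ)⁻¹| * |iteratedFDeriv ℝ k ψ x (fun _ => x' - x)|
            ≤ 1 * (M * h ^ (N:ℕ)) := mul_le_mul e1 e2 (abs_nonneg _) (by norm_num)
          _ = M * h ^ (N:ℕ) := by ring
      refine le_trans (Finset.sum_le_sum hterm) ?_
      rw [Finset.sum_const, Finset.card_range, nsmul_eq_mul]
      push_cast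
      apply le_of_eq; ring
    have final : |ψ x' - taylorPoly ψ N x x'| ≤ M + ((N:ℝ)+1) * (M * h ^ (N:ℕ)) := by
      calc |ψ x' - taylorPoly ψ N x x'| ≤ |ψ x'| + |taylorPoly ψ N x x'| := abs_sub _ _
        _ ≤ M + ((N:ℝ)+1) * (M * h ^ (N:ℕ)) := add_le_add hb1 hb2
    refine le_trans final ?_
    have hNc : (0:ℝ) ≤ (N:ℝ) := Nat.cast_nonneg N
    nlinarith [mul_le_mul_of_nonneg_left hNb (by positivity : (0:ℝ) ≤ ((N:ℝ)+1) * M),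
      mul_le_mul_of_nonneg_left hβ1 hM0]

section MeasureAux

lemma regular_closedBall {d : ℕ} (z : Euc d) (r : ℝ) (hr : 0 < r) :
    Regular ((1/2)^d) r (closedBall z r) := by
  intro x hx s hs hsr
  have hx' : dist x z ≤ r := mem_closedBall.mp hx
  set y : Euc d := x + (s/(2*r)) • (z - x) with hy
  have hsub : closedBall y (s/2) ⊆ closedBall z r ∩ closedBall x s := by
    intro w hw
    have hwy : dist w y ≤ s/2 := mem_closedBall.mp hw
    have hyx : dist y x ≤ s/2 := by
      rw [dist_eq_norm, hy, add_sub_cancel_left, norm_smul, Real.norm_eq_abs]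
      have h1 : ‖z - x‖ ≤ r := by
        rw [← dist_eq_norm]; rw [dist_comm]; exact hx'
      have h2 : |s/(2*r)| = s/(2*r) := abs_of_pos (by positivity)
      rw [h2]
      calc s/(2*r) * ‖z - x‖ ≤ s/(2*r) * r := by
            apply mul_le_mul_of_nonneg_left h1 (by positivity)
        _ = s/2 := by field_simp
    have hyz : dist y z ≤ r - s/2 := by
      have hyzeq : y - z = (1 - s/(2*r)) • (x - z) := by
        rw [hy]; module
      have hfrac : s/(2*r) ≤ 1/2 := by
        rw [div_le_div_iff₀ (by positivity) (by norm_num)]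
        nlinarith
      rw [dist_eq_norm, hyzeq, norm_smul, Real.norm_eq_abs,
        abs_of_nonneg (by linarith : (0:ℝ) ≤ 1 - s/(2*r))]
      have h1 : ‖x - z‖ ≤ r := by rw [← dist_eq_norm]; exact hx'
      calc (1 - s/(2*r)) * ‖x - z‖ ≤ (1 - s/(2*r)) * r := by
            apply mul_le_mul_of_nonneg_left h1 (by linarith)
        _ = r - s/(2*r) * r := by ring
        _ = r - s/2 := by field_simp
    constructor
    · exact mem_closedBall.mpr (le_trans (dist_triangle w y z) (by linarith))
    · exact mem_closedBall.mpr (le_trans (dist_triangle w y x) (by linarith))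
  have hvol : ENNReal.ofReal ((1/2)^d) * volume (closedBall x s)
      = volume (closedBall y (s/2)) := by
    rw [Measure.addHaar_closedBall volume x hs.le, Measure.addHaar_closedBall volume y
      (by positivity : (0:ℝ) ≤ s/2), finrank_euclideanSpace_fin, ← mul_assoc,
      ← ENNReal.ofReal_mul (by positivity)]
    congr 2
    rw [div_pow, div_pow, one_pow]
    field_simp
  rw [hvol]
  exact measure_mono hsub

lemma withDensity_indicator_apply {d : ℕ} (A : Set (Euc d)) (hA : MeasurableSet A) (c : ℝ)
    (T : Set (Euc d)) (hT : MeasurableSet T) :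
    (volume.withDensity fun x => ENNReal.ofReal (A.indicator (fun _ => c) x)) T
      = ENNReal.ofReal c * volume (A ∩ T) := by
  rw [withDensity_apply _ hT]
  have hfun : (fun x => ENNReal.ofReal (A.indicator (fun _ => c) x))
      = A.indicator (fun _ => ENNReal.ofReal c) := by
    funext w
    by_cases hw : w ∈ A
    · simp [indicator_of_mem hw]
    · simp [indicator_of_notMem hw]
  rw [hfun, lintegral_indicator hA, setLIntegral_const, Measure.restrict_apply hA]

end MeasureAux

set_option maxHeartbeats 2000000 in
/-- Proposition 3.4, third item. If `d ≥ 2α` then, for suitable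
parameters, some distribution in `P_Σ` has a regression function hitting `1/2` at a
point of the interior of the support of `P_X`. -/
theorem stmt5 (d : ℕ) (hd : 1 ≤ d) (α β L : ℝ) (hα : 0 < α) (hβ : 0 < β) (hL : 0 < L)
    (hdα : 2 * α ≤ (d : ℝ)) (K : Set (Euc d)) (hK : IsCompact K)
    (hKint : (interior K).Nonempty) :
    ∃ (C0 c0 r0 μmin μmax : ℝ) (PX : Measure (Euc d)) (η : Euc d → ℝ) (x0 : Euc d),
      0 < C0 ∧ 0 < c0 ∧ 0 < r0 ∧ 0 < μmin ∧ μmin < μmax ∧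
      MemPS α C0 β L c0 r0 μmin μmax K PX η ∧
      x0 ∈ interior (msupport PX) ∧ Hits η (1 / 2) x0 := by
  classical
  -- geometry
  obtain ⟨z, hz⟩ := hKint
  obtain ⟨R, hR0, hRK⟩ : ∃ R > 0, ball z R ⊆ K := by
    obtain ⟨R, hR0, hRb⟩ := Metric.isOpen_iff.1 isOpen_interior z hz
    exact ⟨R, hR0, hRb.trans interior_subset⟩
  set r : ℝ := min (R/2) 1 with hrdef
  have hr : 0 < r := lt_min (by linarith) one_pos
  have hrR : r < R := lt_of_le_of_lt (min_le_left _ _) (by linarith)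
  set A : Set (Euc d) := closedBall z r with hAdef
  have hAK : A ⊆ K := (closedBall_subset_ball hrR).trans hRK
  -- bump function
  set f : ContDiffBump z := ⟨r, 2*r, hr, by linarith⟩ with hfdef
  set ψ : Euc d → ℝ := fun x => ‖x - z‖^2 * f x with hψdef
  have hψs : ContDiff ℝ ((⊤:ℕ∞):WithTop ℕ∞) ψ := by
    apply ContDiff.mul
    · exact (contDiff_id.sub contDiff_const).norm_sq (𝕜 := ℝ)
    · exact f.contDiff
  have hψA : ∀ x ∈ A, ψ x = ‖x - z‖^2 := by
    intro x hx
    have hfx1 : f x = 1 := f.one_of_mem_closedBall hx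
    show ‖x - z‖^2 * f x = ‖x - z‖^2
    rw [hfx1, mul_one]
  have hψ0 : ∀ x, 0 ≤ ψ x := fun x => mul_nonneg (by positivity) f.nonneg
  have hψle : ∀ x, ψ x ≤ 4*r^2 := by
    intro x
    by_cases hx : x ∈ ball z (2*r)
    · have h1 : ‖x - z‖ ≤ 2*r := by
        rw [mem_ball, dist_eq_norm] at hx; linarith
      calc ψ x ≤ ‖x-z‖^2 * 1 := mul_le_mul_of_nonneg_left f.le_one (by positivity)
        _ = ‖x-z‖^2 := mul_one _
        _ ≤ (2*r)^2 := by nlinarith [norm_nonneg (x - z)]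
        _ = 4*r^2 := by ring
    · have hfx : f x = 0 := by
        rw [← Function.notMem_support, f.support_eq]; exact hx
      show ‖x - z‖^2 * f x ≤ 4*r^2
      rw [hfx, mul_zero]
      positivity
  have hcs : HasCompactSupport ψ := by
    apply HasCompactSupport.intro (isCompact_closedBall z (2*r))
    intro x hx
    have hfx : f x = 0 := by
      rw [← Function.notMem_support, f.support_eq]
      intro hc; exact hx (ball_subset_closedBall hc)
    show ‖x - z‖^2 * f x = 0
    rw [hfx, mul_zero]
  -- smoothness exponent
  set N : ℕ := ⌈β⌉₊ - 1 with hNdef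
  have hceil1 : 1 ≤ ⌈β⌉₊ := Nat.one_le_ceil_iff.mpr hβ
  have hNcast : ((N:ℝ)) = (⌈β⌉₊ : ℝ) - 1 := by
    rw [hNdef, Nat.cast_sub hceil1, Nat.cast_one]
  have hNβ : (N:ℝ) ≤ β := by
    have := Nat.ceil_lt_add_one hβ.le
    rw [hNcast]; linarith
  have hβN : β ≤ (N:ℝ) + 1 := by
    have := Nat.le_ceil β
    rw [hNcast]; linarith
  -- derivative bounds
  have hbd : ∀ k : ℕ, ∃ Ck : ℝ, ∀ y, ‖iteratedFDeriv ℝ k ψ y‖ ≤ Ck := by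
    intro k
    exact (hcs.iteratedFDeriv k).exists_bound_of_continuous
      (hψs.continuous_iteratedFDeriv (by exact_mod_cast le_top))
  choose C hC using hbd
  set M : ℝ := 1 + ∑ k ∈ Finset.range (N+2), |C k| with hMdef
  have hsumnn : 0 ≤ ∑ k ∈ Finset.range (N+2), |C k| :=
    Finset.sum_nonneg (fun _ _ => abs_nonneg _)
  have hM1 : 1 ≤ M := by rw [hMdef]; linarith
  have hM0 : 0 < M := by linarith
  have hMb : ∀ k, k ≤ N+1 → ∀ y, ‖iteratedFDeriv ℝ k ψ y‖ ≤ M := by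
    intro k hk y
    calc ‖iteratedFDeriv ℝ k ψ y‖ ≤ C k := hC k y
      _ ≤ |C k| := le_abs_self _
      _ ≤ ∑ j ∈ Finset.range (N+2), |C j| :=
          Finset.single_le_sum (f := fun j => |C j|) (fun _ _ => abs_nonneg _)
            (Finset.mem_range.mpr (by omega))
      _ ≤ M := by rw [hMdef]; linarith
  -- choice of ε
  set ε : ℝ := min ((8*r^2)⁻¹) (L / (((N:ℝ)+2)*M)) with hεdef
  have hε0 : 0 < ε := lt_min (by positivity) (by positivity)
  have hε1 : ε * (4*r^2) ≤ 1/2 := by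
    have h1 : ε ≤ (8*r^2)⁻¹ := min_le_left _ _
    calc ε * (4*r^2) ≤ (8*r^2)⁻¹ * (4*r^2) :=
          mul_le_mul_of_nonneg_right h1 (by positivity)
      _ = 1/2 := by field_simp; ring
  have hε2 : ε * (((N:ℝ)+2)*M) ≤ L := by
    have h3 : ε ≤ L / (((N:ℝ)+2)*M) := min_le_right _ _
    have hpos : (0:ℝ) < ((N:ℝ)+2)*M := by positivity
    calc ε * (((N:ℝ)+2)*M) ≤ (L / (((N:ℝ)+2)*M)) * (((N:ℝ)+2)*M) :=
          mul_le_mul_of_nonneg_right h3 hpos.le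
      _ = L := div_mul_cancel₀ L hpos.ne'
  -- regression function
  set η : Euc d → ℝ := fun x => 1/2 + ε * ψ x with hηdef
  have hηs : ContDiff ℝ ((⊤:ℕ∞):WithTop ℕ∞) η := contDiff_const.add (contDiff_const.mul hψs)
  have hηc : Continuous η := hηs.continuous
  -- marginal distribution
  have hA0 : volume A ≠ 0 := (measure_closedBall_pos volume z hr).ne'
  have hAtop : volume A ≠ ⊤ := measure_closedBall_lt_top.ne
  set cA : ℝ := ((volume A).toReal)⁻¹ with hcAdef
  have hcA0 : 0 < cA := inv_pos.mpr (ENNReal.toReal_pos hA0 hAtop)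
  set μf : Euc d → ℝ := A.indicator (fun _ => cA) with hμfdef
  set PX : Measure (Euc d) := volume.withDensity fun x => ENNReal.ofReal (μf x) with hPXdef
  have hPXT : ∀ T, MeasurableSet T → PX T = ENNReal.ofReal cA * volume (A ∩ T) := by
    intro T hT
    rw [hPXdef, hμfdef]
    exact withDensity_indicator_apply A measurableSet_closedBall cA T hT
  have hA1 : ENNReal.ofReal cA * volume A = 1 := by
    rw [hcAdef, ENNReal.ofReal_inv_of_pos (ENNReal.toReal_pos hA0 hAtop),
      ENNReal.ofReal_toReal hAtop]
    exact ENNReal.inv_mul_cancel hA0 hAtop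
  have hprob : IsProbabilityMeasure PX := by
    constructor
    rw [hPXT univ MeasurableSet.univ, inter_univ, hA1]
  -- unit ball volume
  set v : ℝ := (volume (ball (0:Euc d) 1)).toReal with hvdef
  have hvfin : volume (ball (0:Euc d) 1) ≠ ⊤ := measure_ball_lt_top.ne
  have hveq : volume (ball (0:Euc d) 1) = ENNReal.ofReal v := (ENNReal.ofReal_toReal hvfin).symm
  have hv0 : 0 ≤ v := ENNReal.toReal_nonneg
  set C0 : ℝ := (1 + cA * v) / ε ^ α with hC0def
  have hεα : (0:ℝ) < ε ^ α := Real.rpow_pos_of_pos hε0 α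
  have hC0pos : 0 < C0 := div_pos (by nlinarith) hεα
  refine ⟨C0, (1/2)^d, r, cA/2, cA+1, PX, η, z, hC0pos, by positivity, hr,
    by positivity, by linarith, ⟨hprob, hηc.measurable, ?_, ?_, ?_, ?_⟩, ?_, ?_⟩
  · -- range of η
    intro x
    have h1 : 0 ≤ ε * ψ x := mul_nonneg hε0.le (hψ0 x)
    have h2 : ε * ψ x ≤ 1/2 := by
      calc ε * ψ x ≤ ε * (4*r^2) := mul_le_mul_of_nonneg_left (hψle x) hε0.le
        _ ≤ 1/2 := hε1
    constructor
    · rw [hηdef]; dsimp only; linarith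
    · rw [hηdef]; dsimp only; linarith
  · -- Margin
    intro t ht
    have hScond : ∀ x : Euc d, ((0:ℝ) < |η x - 1/2| ∧ |η x - 1/2| ≤ t)
        ↔ (0 < ε * ψ x ∧ ε * ψ x ≤ t) := by
      intro x
      have he : η x - 1/2 = ε * ψ x := by rw [hηdef]; ring
      rw [he, abs_of_nonneg (mul_nonneg hε0.le (hψ0 x))]
    have hSm : MeasurableSet {x : Euc d | 0 < |η x - 1/2| ∧ |η x - 1/2| ≤ t} := by
      have h1 : Continuous fun x : Euc d => |η x - 1/2| := (hηc.sub continuous_const).abs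
      have : {x : Euc d | 0 < |η x - 1/2| ∧ |η x - 1/2| ≤ t}
          = {x : Euc d | 0 < |η x - 1/2|} ∩ {x : Euc d | |η x - 1/2| ≤ t} := rfl
      rw [this]
      exact ((isOpen_lt continuous_const h1).measurableSet).inter
        ((isClosed_le h1 continuous_const).measurableSet)
    rw [hPXT _ hSm]
    have htα : (0:ℝ) < t ^ α := Real.rpow_pos_of_pos ht α
    rcases le_or_gt ε t with hcase | hcase
    · -- large t
      have hb : ENNReal.ofReal cA * volume (A ∩ {x : Euc d | 0 < |η x - 1/2| ∧ |η x - 1/2| ≤ t}) ≤ 1 := by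
        rw [← hA1]
        exact mul_le_mul_of_nonneg_left (measure_mono inter_subset_left) (by positivity)
      refine le_trans hb ?_
      rw [← ENNReal.ofReal_one]
      apply ENNReal.ofReal_le_ofReal
      have h1 : ε ^ α ≤ t ^ α := Real.rpow_le_rpow hε0.le hcase hα.le
      have h2 : (1:ℝ) ≤ 1 + cA * v := by nlinarith
      rw [hC0def, div_mul_eq_mul_div, le_div_iff₀ hεα]
      nlinarith
    · -- small t
      have hsub : A ∩ {x : Euc d | 0 < |η x - 1/2| ∧ |η x - 1/2| ≤ t}
          ⊆ closedBall z (Real.sqrt (t/ε)) := by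
        rintro x ⟨hxA, hxS⟩
        rw [mem_setOf_eq, hScond x] at hxS
        have hx2 : ε * ‖x - z‖^2 ≤ t := by
          have := hψA x hxA
          rw [← this]; exact hxS.2
        have hx3 : ‖x - z‖^2 ≤ t/ε := by
          rw [le_div_iff₀' hε0]; exact hx2
        have hnorm : ‖x - z‖ ≤ Real.sqrt (t/ε) := by
          rw [← Real.sqrt_sq (norm_nonneg (x - z))]
          exact Real.sqrt_le_sqrt hx3
        rw [mem_closedBall, dist_eq_norm]
        exact hnorm
      have hvol : volume (A ∩ {x : Euc d | 0 < |η x - 1/2| ∧ |η x - 1/2| ≤ t})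
          ≤ ENNReal.ofReal (Real.sqrt (t/ε) ^ d * v) := by
        refine le_trans (measure_mono hsub) ?_
        rw [Measure.addHaar_closedBall volume z (Real.sqrt_nonneg _),
          finrank_euclideanSpace_fin, hveq, ← ENNReal.ofReal_mul (by positivity)]
      have hu0 : 0 < t/ε := div_pos ht hε0
      have hu1 : t/ε ≤ 1 := (div_le_one hε0).mpr hcase.le
      have hsq : Real.sqrt (t/ε) ^ d = (t/ε) ^ ((d:ℝ)/2) := by
        rw [Real.sqrt_eq_rpow, ← Real.rpow_natCast ((t/ε) ^ ((1:ℝ)/2)) d,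
          ← Real.rpow_mul hu0.le]
        congr 1
        ring
      have hexp : (t/ε) ^ ((d:ℝ)/2) ≤ (t/ε) ^ α :=
        Real.rpow_le_rpow_of_exponent_ge hu0 hu1 (by linarith)
      have hdivr : (t/ε) ^ α = t^α / ε^α := Real.div_rpow ht.le hε0.le α
      have hreal : cA * (Real.sqrt (t/ε) ^ d * v) ≤ C0 * t^α := by
        rw [hsq, hC0def]
        have hstep : cA * ((t/ε) ^ ((d:ℝ)/2) * v) ≤ cA * ((t/ε) ^ α * v) := by
          apply mul_le_mul_of_nonneg_left _ hcA0.le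
          exact mul_le_mul_of_nonneg_right hexp hv0
        refine le_trans hstep ?_
        rw [hdivr]
        have e1 : cA * (t^α/ε^α * v) = (cA*v*t^α)/ε^α := by field_simp
        have e2 : (1 + cA*v)/ε^α * t^α = ((1+cA*v)*t^α)/ε^α := by ring
        rw [e1, e2]
        gcongr
        nlinarith
      calc ENNReal.ofReal cA * volume (A ∩ {x : Euc d | 0 < |η x - 1/2| ∧ |η x - 1/2| ≤ t})
          ≤ ENNReal.ofReal cA * ENNReal.ofReal (Real.sqrt (t/ε) ^ d * v) :=
            mul_le_mul_of_nonneg_left hvol (by positivity)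
        _ = ENNReal.ofReal (cA * (Real.sqrt (t/ε) ^ d * v)) :=
            (ENNReal.ofReal_mul hcA0.le).symm
        _ ≤ ENNReal.ofReal (C0 * t ^ α) := ENNReal.ofReal_le_ofReal hreal
  · -- Hölder class
    constructor
    · exact hηs.of_le (WithTop.coe_le_coe.mpr le_top)
    · intro x x'
      have hNN : ⌈β⌉₊ - 1 = N := hNdef.symm
      rw [hNN]
      have hlin : taylorPoly η N x x' = 1/2 + ε * taylorPoly ψ N x x' := by
        rw [hηdef]
        exact taylorPoly_const_add_smul ψ hψs (1/2) ε N x x'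
      have hdiff : η x' - taylorPoly η N x x' = ε * (ψ x' - taylorPoly ψ N x x') := by
        rw [hlin, hηdef]; ring
      rw [hdiff, abs_mul, abs_of_pos hε0]
      have hest := holder_est ψ hψs N M hM1 hMb β hβ hNβ hβN x x'
      calc ε * |ψ x' - taylorPoly ψ N x x'| ≤ ε * (((N:ℝ) + 2) * M * ‖x' - x‖ ^ β) :=
            mul_le_mul_of_nonneg_left hest hε0.le
        _ = (ε * (((N:ℝ) + 2) * M)) * ‖x' - x‖ ^ β := by ring
        _ ≤ L * ‖x' - x‖ ^ β :=
            mul_le_mul_of_nonneg_right hε2 (Real.rpow_nonneg (norm_nonneg _) β)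
  · -- Strong density
    refine ⟨A, isCompact_closedBall _ _, hAK, ?_, μf, ?_, ?_, ?_, ?_⟩
    · exact regular_closedBall z r hr
    · exact Measurable.indicator measurable_const measurableSet_closedBall
    · intro x hx
      rw [hμfdef, indicator_of_mem hx]
      constructor <;> linarith
    · intro x hx
      rw [hμfdef, indicator_of_notMem hx]
    · rfl
  · -- interior of support
    have hball : ball z r ⊆ msupport PX := by
      intro x hx
      intro ρ hρ
      have hxz : dist x z < r := mem_ball.mp hx
      set ρ' : ℝ := min ρ (r - dist x z) with hρ'def
      have hρ'0 : 0 < ρ' := lt_min hρ (by linarith)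
      have hsub2 : ball x ρ' ⊆ A ∩ ball x ρ := by
        intro w hw
        rw [mem_ball] at hw
        constructor
        · rw [hAdef, mem_closedBall]
          have h1 : dist w z ≤ dist w x + dist x z := dist_triangle w x z
          have h2 : dist w x < r - dist x z := lt_of_lt_of_le hw (min_le_right _ _)
          linarith
        · exact mem_ball.mpr (lt_of_lt_of_le hw (min_le_left _ _))
      rw [hPXT (ball x ρ) measurableSet_ball]
      have hpos : 0 < volume (A ∩ ball x ρ) :=
        lt_of_lt_of_le (measure_ball_pos volume x hρ'0) (measure_mono hsub2)
      exact ENNReal.mul_pos (ENNReal.ofReal_pos.mpr hcA0).ne' hpos.ne'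
    exact interior_maximal hball isOpen_ball (mem_ball_self hr)
  · -- Hits
    constructor
    · rw [hηdef]
      dsimp only
      rw [hψdef]
      simp
    · intro s hs
      set i0 : Fin d := ⟨0, hd⟩ with hi0
      set u : Euc d := EuclideanSpace.single i0 (1:ℝ) with hu
      have hun : ‖u‖ = 1 := by
        rw [hu]
        simp [EuclideanSpace.norm_single]
      set δ : ℝ := min s r with hδdef
      have hδ0 : 0 < δ := lt_min hs hr
      have hnd : ‖(z + δ • u) - z‖ = δ := by
        rw [add_sub_cancel_left, norm_smul, Real.norm_eq_abs, abs_of_pos hδ0, hun, mul_one]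
      refine ⟨z + δ • u, ?_, ?_⟩
      · rw [mem_closedBall, dist_eq_norm, hnd]
        exact min_le_left _ _
      · have hmem : z + δ • u ∈ A := by
          rw [hAdef, mem_closedBall, dist_eq_norm, hnd]
          exact min_le_right _ _
        have hψv : ψ (z + δ • u) = δ^2 := by
          rw [hψA _ hmem, hnd]
        rw [hηdef]
        dsimp only
        rw [hψv]
        have hposv : 0 < ε * δ^2 := by positivity
        intro hcontra
        linarith
  

end
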